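/- Let Θ : KH(Γ⃗) → End_ℤ(V) be the monoid homomorphism determined by Θ(ε_i) = θ_i. Then for every α ∈ KH(Γ⃗), the matrix of Θ(α) with respect to the basis {v_i : i ∈ Γ₀} has all entries equal to 0 or 1; that is, for every j ∈ Γ₀, Θ(α)(v_j) is a sum of pairwise distinct basis vectors. Moreover, Θ(α)(v_j) is a {0,1}-linear combination of those v_k for which there is a directed path from k to j in Γ⃗. -/

import Mathlib

open FreeMonoid SimpleGraph

/-- The defining relations of a Hecke-Kiselman monoid associated with the
mixed graph encoded by the binary relation `Θ`. -/
inductive HKRel {ι : Type*} (Θ : ι → ι → Prop) : FreeMonoid ι → FreeMonoid ι → Prop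
  | idem (i : ι) : HKRel Θ (of i * of i) (of i)
  | comm (i j : ι) (h₁ : ¬ Θ i j) (h₂ : ¬ Θ j i) :
      HKRel Θ (of i * of j) (of j * of i)
  | braid (i j : ι) (h₁ : Θ i j) (h₂ : Θ j i) :
      HKRel Θ (of i * of j * of i) (of j * of i * of j)
  | kisel (i j : ι) (h₁ : Θ i j) (h₂ : ¬ Θ j i) :
      HKRel Θ (of i * of j * of i) (of i * of j)
  | kisel' (i j : ι) (h₁ : Θ i j) (h₂ : ¬ Θ j i) :
      HKRel Θ (of j * of i * of j) (of i * of j)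

/-- The Hecke-Kiselman monoid of the mixed graph encoded by `Θ`. -/
abbrev HK {ι : Type*} (Θ : ι → ι → Prop) : Type _ := (conGen (HKRel Θ)).Quotient

/-- The canonical idempotent generators of a Hecke-Kiselman monoid. -/
def HK.gen {ι : Type*} (Θ : ι → ι → Prop) (i : ι) : HK Θ :=
  (conGen (HKRel Θ)).mk' (FreeMonoid.of i)

/-- Dynkin diagram of type `D n` (meaningful for `4 ≤ n`). -/
def typeD (n : ℕ) : SimpleGraph (Fin n) :=
  SimpleGraph.fromRel (fun i j =>
    ((i : ℕ) + 1 = (j : ℕ) ∧ 1 ≤ (i : ℕ)) ∨ ((i : ℕ) = 0 ∧ (j : ℕ) = 2))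

/-- Dynkin diagram of type `E n` (meaningful for `n = 6, 7, 8`). -/
def typeE (n : ℕ) : SimpleGraph (Fin n) :=
  SimpleGraph.fromRel (fun i j =>
    ((i : ℕ) + 1 = (j : ℕ) ∧ 1 ≤ (i : ℕ)) ∨ ((i : ℕ) = 0 ∧ (j : ℕ) = 3))

/-- A graph is of type `A`, `D` or `E` if it is isomorphic to one of the
simply laced Dynkin diagrams `A n` (`n ≥ 1`), `D n` (`n ≥ 4`), `E6`, `E7`, `E8`. -/
def IsADE {V : Type*} (G : SimpleGraph V) : Prop :=
  (∃ n, 1 ≤ n ∧ Nonempty (G ≃g pathGraph n)) ∨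
  (∃ n, 4 ≤ n ∧ Nonempty (G ≃g typeD n)) ∨
  (∃ n, (n = 6 ∨ n = 7 ∨ n = 8) ∧ Nonempty (G ≃g typeE n))

/-- A simply laced Dynkin diagram: a simple graph each of whose connected
components is of type `A`, `D` or `E`. -/
def IsSimplyLacedDynkin {V : Type*} (G : SimpleGraph V) : Prop :=
  ∀ c : G.ConnectedComponent, IsADE (G.induce c.supp)

/-- `Θ` is an orientation of the simple graph `G`: every edge of `G` is given
exactly one direction. -/
def IsOrientation {V : Type*} (G : SimpleGraph V) (Θ : V → V → Prop) : Prop :=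
  (∀ i j, G.Adj i j ↔ (Θ i j ∨ Θ j i)) ∧ (∀ i j, Θ i j → ¬ Θ j i)

/-! ### Auxiliary machinery (added for the proof) -/

section GoodRankAux

variable {V : Type*}

/-- A rank function injective on edges and with at most one smaller neighbour. -/
def GoodRank (G : SimpleGraph V) : Prop :=
  ∃ f : V → ℕ, (∀ x y, G.Adj x y → f x ≠ f y) ∧
    (∀ m x y, G.Adj m x → G.Adj m y → f x < f m → f y < f m → x = y)

lemma GoodRank.of_iso {W : Type*} {G : SimpleGraph V} {H : SimpleGraph W}
    (e : G ≃g H) (h : GoodRank H) : GoodRank G := by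
  obtain ⟨f, h1, h2⟩ := h
  refine ⟨fun v => f (e v), fun x y hxy => h1 _ _ (e.map_adj_iff.mpr hxy),
    fun m x y a1 a2 l1 l2 => ?_⟩
  have := h2 (e m) (e x) (e y) (e.map_adj_iff.mpr a1) (e.map_adj_iff.mpr a2) l1 l2
  exact e.toEquiv.injective this

lemma goodRank_pathGraph (n : ℕ) : GoodRank (pathGraph n) := by
  refine ⟨fun i => (i : ℕ), ?_, ?_⟩
  · intro x y h
    rw [pathGraph_adj] at h
    dsimp only
    omega
  · intro m x y h1 h2 l1 l2
    rw [pathGraph_adj] at h1 h2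
    dsimp only at l1 l2
    exact Fin.ext (by omega)

lemma goodRank_typeD (n : ℕ) : GoodRank (typeD n) := by
  refine ⟨fun i => if (i : ℕ) = 0 then 5 else 2 * (i : ℕ), ?_, ?_⟩
  · intro x y h
    unfold typeD at h
    rw [fromRel_adj] at h
    have hne : (x : ℕ) ≠ (y : ℕ) := fun hv => h.1 (Fin.ext hv)
    have h2 := h.2
    dsimp only
    split_ifs <;> omega
  · intro m x y h1 h2 l1 l2
    unfold typeD at h1 h2
    rw [fromRel_adj] at h1 h2
    have e1 := h1.2; have e2 := h2.2
    dsimp only at l1 l2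
    refine Fin.ext ?_
    split_ifs at l1 l2 <;> omega

lemma goodRank_typeE (n : ℕ) : GoodRank (typeE n) := by
  refine ⟨fun i => if (i : ℕ) = 0 then 7 else 2 * (i : ℕ), ?_, ?_⟩
  · intro x y h
    unfold typeE at h
    rw [fromRel_adj] at h
    have hne : (x : ℕ) ≠ (y : ℕ) := fun hv => h.1 (Fin.ext hv)
    have h2 := h.2
    dsimp only
    split_ifs <;> omega
  · intro m x y h1 h2 l1 l2
    unfold typeE at h1 h2
    rw [fromRel_adj] at h1 h2
    have e1 := h1.2; have e2 := h2.2
    dsimp only at l1 l2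
    refine Fin.ext ?_
    split_ifs at l1 l2 <;> omega

lemma IsADE.goodRank {G : SimpleGraph V} (h : IsADE G) : GoodRank G := by
  rcases h with ⟨n, -, ⟨e⟩⟩ | ⟨n, -, ⟨e⟩⟩ | ⟨n, -, ⟨e⟩⟩
  · exact .of_iso e (goodRank_pathGraph n)
  · exact .of_iso e (goodRank_typeD n)
  · exact .of_iso e (goodRank_typeE n)

lemma goodrank_no_cycle {G : SimpleGraph V} (f : V → ℕ)
    (hf1 : ∀ x y, G.Adj x y → f x ≠ f y)
    (hf2 : ∀ m x y, G.Adj m x → G.Adj m y → f x < f m → f y < f m → x = y)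
    {m : V} (c : G.Walk m m) (hc : c.IsCycle) (hm : ∀ u ∈ c.support, f u ≤ f m) :
    False := by
  cases c with
  | nil => exact hc.not_nil (by simp)
  | @cons _ b _ hadj p =>
    have hp : p.IsPath := ((Walk.cons_isCycle_iff p hadj).mp hc).1
    have hlen3 := hc.three_le_length
    simp only [Walk.length_cons] at hlen3
    have hrlen : 2 ≤ p.reverse.length := by rw [Walk.length_reverse]; omega
    have hrpath : p.reverse.IsPath := hp.reverse
    cases hrev : p.reverse with
    | nil => rw [hrev] at hrlen; simp at hrlen
    | @cons _ y _ h2 q =>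
      rw [hrev] at hrpath hrlen
      have hq := (Walk.cons_isPath_iff h2 q).mp hrpath
      have hysup : y ∈ p.support := by
        have hy : y ∈ p.reverse.support := by
          rw [hrev, Walk.support_cons]
          exact List.mem_cons_of_mem _ (Walk.start_mem_support q)
        rwa [Walk.support_reverse, List.mem_reverse] at hy
      have hbsup : b ∈ p.support := Walk.start_mem_support p
      have hym : f y < f m :=
        lt_of_le_of_ne (hm y (by rw [Walk.support_cons]; exact List.mem_cons_of_mem _ hysup))
          (Ne.symm (hf1 m y h2))
      have hbm : f b < f m :=
        lt_of_le_of_ne (hm b (by rw [Walk.support_cons]; exact List.mem_cons_of_mem _ hbsup))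
          (Ne.symm (hf1 m b hadj))
      have hbney : y ≠ b := by
        intro h
        subst h
        cases q with
        | nil => simp at hrlen
        | cons h3 q3 =>
          have h4 := (Walk.cons_isPath_iff h3 q3).mp hq.1
          exact h4.2 (Walk.end_mem_support q3)
      exact hbney (hf2 m y b h2 hadj hym hbm)

lemma GoodRank.isAcyclic {G : SimpleGraph V} (h : GoodRank G) : G.IsAcyclic := by
  classical
  obtain ⟨f, hf1, hf2⟩ := h
  intro v c hc
  obtain ⟨m, hm, hmax⟩ := (c.support.toFinset).exists_max_image f
    ⟨v, List.mem_toFinset.mpr (Walk.start_mem_support c)⟩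
  rw [List.mem_toFinset] at hm
  refine goodrank_no_cycle f hf1 hf2 (c.rotate m hm) (hc.rotate hm) ?_
  intro u hu
  rw [Walk.support_eq_cons] at hu
  rcases List.mem_cons.mp hu with rfl | hu
  · exact le_rfl
  · exact hmax u (List.mem_toFinset.mpr
      (List.mem_of_mem_tail ((Walk.support_rotate c m hm).mem_iff.mp hu)))

lemma goodRank_global (G : SimpleGraph V)
    (h : ∀ c : G.ConnectedComponent, GoodRank (G.induce c.supp)) : GoodRank G := by
  choose f hf1 hf2 using h
  have hmem : ∀ v : V, v ∈ (G.connectedComponentMk v).supp :=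
    fun v => (ConnectedComponent.mem_supp_iff _ _).mpr rfl
  set g : V → ℕ := fun v => f (G.connectedComponentMk v) ⟨v, hmem v⟩ with hg
  have haux : ∀ (v : V) (C : G.ConnectedComponent) (hv : v ∈ C.supp),
      f C ⟨v, hv⟩ = g v := by
    intro v C hv
    obtain rfl : G.connectedComponentMk v = C := (ConnectedComponent.mem_supp_iff _ _).mp hv
    rfl
  refine ⟨g, ?_, ?_⟩
  · intro x y hxy
    have hyC : y ∈ (G.connectedComponentMk x).supp :=
      (ConnectedComponent.mem_supp_iff _ _).mpr (ConnectedComponent.connectedComponentMk_eq_of_adj hxy).symm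
    have := hf1 (G.connectedComponentMk x) ⟨x, hmem x⟩ ⟨y, hyC⟩ hxy
    rwa [haux x _ (hmem x), haux y _ hyC] at this
  · intro m x y a1 a2 l1 l2
    have hxC : x ∈ (G.connectedComponentMk m).supp :=
      (ConnectedComponent.mem_supp_iff _ _).mpr (ConnectedComponent.connectedComponentMk_eq_of_adj a1).symm
    have hyC : y ∈ (G.connectedComponentMk m).supp :=
      (ConnectedComponent.mem_supp_iff _ _).mpr (ConnectedComponent.connectedComponentMk_eq_of_adj a2).symm
    rw [← haux x _ hxC, ← haux m _ (hmem m)] at l1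
    rw [← haux y _ hyC, ← haux m _ (hmem m)] at l2
    have := hf2 (G.connectedComponentMk m) ⟨m, hmem m⟩ ⟨x, hxC⟩ ⟨y, hyC⟩ a1 a2 l1 l2
    exact congrArg Subtype.val this

lemma IsSimplyLacedDynkin.isAcyclic {G : SimpleGraph V} (hG : IsSimplyLacedDynkin G) :
    G.IsAcyclic :=
  (goodRank_global G fun c => (hG c).goodRank).isAcyclic

end GoodRankAux

section DirAux

variable {V : Type*} {G : SimpleGraph V} {Θ : V → V → Prop}

/-- A walk all of whose darts follow the orientation `Θ`. -/
def IsDirW (Θ : V → V → Prop) {u v : V} (p : G.Walk u v) : Prop :=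
  ∀ d ∈ p.darts, Θ d.toProd.1 d.toProd.2

lemma theta_irrefl (hΘ : IsOrientation G Θ) (i : V) : ¬ Θ i i :=
  fun h => G.irrefl ((hΘ.1 i i).mpr (Or.inl h))

lemma exists_dirPath (hΘ : IsOrientation G Θ) {x y : V}
    (h : Relation.ReflTransGen Θ x y) :
    ∃ p : G.Walk x y, p.IsPath ∧ IsDirW Θ p := by
  classical
  have : ∃ p : G.Walk x y, IsDirW Θ p := by
    induction h with
    | refl => exact ⟨Walk.nil, by intro d hd; simp [Walk.darts_nil] at hd⟩
    | @tail b c hab hbc ih =>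
      obtain ⟨p, hp⟩ := ih
      refine ⟨p.concat ((hΘ.1 b c).mpr (Or.inl hbc)), ?_⟩
      intro d hd
      rw [Walk.darts_concat, List.concat_eq_append, List.mem_append] at hd
      rcases hd with hd | hd
      · exact hp d hd
      · simp only [List.mem_singleton] at hd
        subst hd
        exact hbc
  obtain ⟨p, hp⟩ := this
  exact ⟨p.bypass, p.bypass_isPath, fun d hd => hp d (p.darts_bypass_subset hd)⟩

lemma not_mem_dirPath (hΘ : IsOrientation G Θ) (hA : G.IsAcyclic) {m i j : V}
    (hmi : Θ m i) {p : G.Walk i j} (hp : p.IsPath) (hd : IsDirW Θ p) :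
    m ∉ p.support := by
  classical
  intro hmem
  have hne : i ≠ m := fun h => theta_irrefl hΘ i (by rw [h] at hmi ⊢; exact hmi)
  have ht : (p.takeUntil m hmem).IsPath := hp.takeUntil hmem
  have htd : IsDirW Θ (p.takeUntil m hmem) :=
    fun d hd' => hd d (p.darts_takeUntil_subset hmem hd')
  have hadj : G.Adj i m := ((hΘ.1 m i).mpr (Or.inl hmi)).symm
  have hsp : (Walk.cons hadj Walk.nil : G.Walk i m).IsPath := by
    rw [Walk.cons_isPath_iff]
    exact ⟨Walk.IsPath.nil, by simp [hne]⟩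
  have hun := hA.path_unique ⟨p.takeUntil m hmem, ht⟩ ⟨Walk.cons hadj Walk.nil, hsp⟩
  have ht2 : p.takeUntil m hmem = Walk.cons hadj Walk.nil := congrArg Subtype.val hun
  have him : Θ i m := by
    refine htd ⟨(i, m), hadj⟩ ?_
    rw [ht2]
    simp [Walk.darts_cons]
  exact hΘ.2 m i hmi him

lemma dirPath_eq_cons (hΘ : IsOrientation G Θ) (hA : G.IsAcyclic) {m i j : V}
    (hmi : Θ m i) {q : G.Walk i j} (hq : q.IsPath) (hqd : IsDirW Θ q)
    {p : G.Walk m j} (hp : p.IsPath) (hpd : IsDirW Θ p) :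
    p = Walk.cons ((hΘ.1 m i).mpr (Or.inl hmi)) q := by
  classical
  have hm : m ∉ q.support := not_mem_dirPath hΘ hA hmi hq hqd
  have hcp : (Walk.cons ((hΘ.1 m i).mpr (Or.inl hmi)) q).IsPath := hq.cons hm
  exact congrArg Subtype.val (hA.path_unique ⟨p, hp⟩ ⟨_, hcp⟩)

end DirAux

open scoped Classical in
lemma kiselman_aux {V : Type*} [Fintype V] {G : SimpleGraph V} {Θ : V → V → Prop}
    (hΘ : IsOrientation G Θ) (hA : G.IsAcyclic)
    (θ : V → AddMonoid.End (V →₀ ℤ))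
    (hθ₁ : ∀ i j : V, j ≠ i → θ i (Finsupp.single j 1) = Finsupp.single j 1)
    (hθ₂ : ∀ i : V,
      θ i (Finsupp.single i 1) = ∑ k : V, if Θ k i then Finsupp.single k 1 else 0)
    (j : V) : ∀ l : List V,
    ∃ S : Finset V,
      (∀ x ∈ S, Relation.ReflTransGen Θ x j) ∧
      (∀ x ∈ S, ∀ y ∈ S, y ≠ x → ∀ p : G.Walk x j, p.IsPath → IsDirW Θ p →
        y ∉ p.support) ∧
      ((l.map θ).prod (Finsupp.single j 1) = ∑ k ∈ S, Finsupp.single k 1) := by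
  intro l
  induction l with
  | nil =>
    refine ⟨{j}, ?_, ?_, ?_⟩
    · intro x hx; rw [Finset.mem_singleton] at hx; subst hx; exact .refl
    · intro x hx y hy hne
      rw [Finset.mem_singleton] at hx hy
      subst hx; subst hy; exact absurd rfl hne
    · simp
  | cons i l ih =>
    obtain ⟨S, hS1, hS2, hS3⟩ := ih
    have hstep : ((i :: l).map θ).prod (Finsupp.single j 1)
        = θ i (∑ k ∈ S, Finsupp.single k 1) := by
      rw [List.map_cons, List.prod_cons]
      show θ i ((l.map θ).prod (Finsupp.single j 1)) = _
      rw [hS3]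
    by_cases hi : i ∈ S
    · set N : Finset V := Finset.univ.filter (fun m => Θ m i) with hN
      have hNmem : ∀ m, m ∈ N ↔ Θ m i := by intro m; simp [hN]
      obtain ⟨q, hq, hqd⟩ := exists_dirPath hΘ (hS1 i hi)
      have hdis : Disjoint (S.erase i) N := by
        rw [Finset.disjoint_right]
        intro m hmN hmE
        have hmi : Θ m i := (hNmem m).mp hmN
        obtain ⟨hmne, hmS⟩ := Finset.mem_erase.mp hmE
        have hcp := (hq.cons (not_mem_dirPath hΘ hA hmi hq hqd)
          (h := (hΘ.1 m i).mpr (Or.inl hmi)))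
        have hcd : IsDirW Θ (Walk.cons ((hΘ.1 m i).mpr (Or.inl hmi)) q) := by
          intro d hd
          rw [Walk.darts_cons, List.mem_cons] at hd
          rcases hd with rfl | hd
          · exact hmi
          · exact hqd d hd
        exact hS2 m hmS i hi (Ne.symm hmne) _ hcp hcd
          (by rw [Walk.support_cons]; exact List.mem_cons_of_mem _ (Walk.start_mem_support q))
      refine ⟨S.erase i ∪ N, ?_, ?_, ?_⟩
      · intro x hx
        rcases Finset.mem_union.mp hx with hx | hx
        · exact hS1 x (Finset.mem_of_mem_erase hx)
        · exact Relation.ReflTransGen.head ((hNmem x).mp hx) (hS1 i hi)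
      · intro x hx y hy hne p hp hpd
        rcases Finset.mem_union.mp hx with hx | hx
        · obtain ⟨hxne, hxS⟩ := Finset.mem_erase.mp hx
          rcases Finset.mem_union.mp hy with hy | hy
          · exact hS2 x hxS y (Finset.mem_of_mem_erase hy) hne p hp hpd
          · intro hysup
            have hyi : Θ y i := (hNmem y).mp hy
            have hr : (p.dropUntil y hysup).IsPath := hp.dropUntil hysup
            have hrd : IsDirW Θ (p.dropUntil y hysup) :=
              fun d hd => hpd d (p.darts_dropUntil_subset hysup hd)
            have heq := dirPath_eq_cons hΘ hA hyi hq hqd hr hrd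
            have hisup : i ∈ (p.dropUntil y hysup).support := by
              rw [heq, Walk.support_cons]
              exact List.mem_cons_of_mem _ (Walk.start_mem_support q)
            exact hS2 x hxS i hi (Ne.symm hxne) p hp hpd
              (p.support_dropUntil_subset hysup hisup)
        · have hxi : Θ x i := (hNmem x).mp hx
          have heq := dirPath_eq_cons hΘ hA hxi hq hqd hp hpd
          rw [heq, Walk.support_cons]
          intro hysup
          rcases List.mem_cons.mp hysup with rfl | hysup
          · exact hne rfl
          · rcases Finset.mem_union.mp hy with hy | hy
            · obtain ⟨hyne, hyS⟩ := Finset.mem_erase.mp hy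
              exact hS2 i hi y hyS hyne q hq hqd hysup
            · exact not_mem_dirPath hΘ hA ((hNmem y).mp hy) hq hqd hysup
      · rw [hstep, map_sum, ← Finset.sum_erase_add _ _ hi]
        have h1 : ∀ k ∈ S.erase i, θ i (Finsupp.single k 1) = Finsupp.single k 1 :=
          fun k hk => hθ₁ i k (Finset.mem_erase.mp hk).1
        rw [Finset.sum_congr rfl h1, hθ₂ i, Finset.sum_union hdis]
        congr 1
        rw [hN, Finset.sum_filter]
    · refine ⟨S, hS1, hS2, ?_⟩
      rw [hstep, map_sum]
      refine Finset.sum_congr rfl ?_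
      intro m hm
      exact hθ₁ i m (fun h => hi (h ▸ hm))

open scoped Classical in
/-- Let `Θ : KH(Γ⃗) → End_ℤ(V)` be the linear representation
determined by `Θ(ε i) = θ i` (here called `Φ`, with `V = Γ₀ →₀ ℤ` the free
abelian group on the vertex set and `v i = single i 1`). Then for every element
`α` the matrix of `Φ α` in the basis `{v i}` has all entries `0` or `1`, and the
`(k, j)` entry can be nonzero only if there is a directed path from `k` to `j`
in `Γ⃗`. -/
theorem kiselmanQuotient_linear_representation_zero_one {V : Type*} [Fintype V]
    (G : SimpleGraph V) (hG : IsSimplyLacedDynkin G)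
    (Θ : V → V → Prop) (hΘ : IsOrientation G Θ)
    (θ : V → AddMonoid.End (V →₀ ℤ))
    (hθ₁ : ∀ i j : V, j ≠ i → θ i (Finsupp.single j 1) = Finsupp.single j 1)
    (hθ₂ : ∀ i : V,
      θ i (Finsupp.single i 1) = ∑ k : V, if Θ k i then Finsupp.single k 1 else 0)
    (Φ : HK Θ →* AddMonoid.End (V →₀ ℤ))
    (hΦ : ∀ i, Φ (HK.gen Θ i) = θ i)
    (α : HK Θ) (j k : V) :
    (Φ α (Finsupp.single j 1) k = 0 ∨ Φ α (Finsupp.single j 1) k = 1) ∧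
      (Φ α (Finsupp.single j 1) k ≠ 0 → Relation.ReflTransGen Θ k j) := by
  obtain ⟨x, rfl⟩ := Con.mk'_surjective (c := conGen (HKRel Θ)) α
  have hA : G.IsAcyclic := hG.isAcyclic
  have key : ∀ l : List V,
      Φ ((conGen (HKRel Θ)).mk' (FreeMonoid.ofList l)) = (l.map θ).prod := by
    intro l
    induction l with
    | nil =>
      show Φ ((conGen (HKRel Θ)).mk' 1) = (1 : AddMonoid.End (V →₀ ℤ))
      rw [map_one, map_one]
    | cons a l ihl =>
      have h : FreeMonoid.ofList (a :: l) = FreeMonoid.of a * FreeMonoid.ofList l := rfl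
      rw [h, map_mul, map_mul, ihl, List.map_cons, List.prod_cons]
      congr 1
      exact hΦ a
  obtain ⟨S, hS1, hS2, hS3⟩ := kiselman_aux hΘ hA θ hθ₁ hθ₂ j (FreeMonoid.toList x)
  have hval : Φ ((conGen (HKRel Θ)).mk' x) (Finsupp.single j 1)
      = ∑ m ∈ S, Finsupp.single m 1 := by
    rw [← FreeMonoid.ofList_toList x, key (FreeMonoid.toList x), hS3]
  rw [hval]
  have happ : (∑ m ∈ S, Finsupp.single m (1 : ℤ)) k = if k ∈ S then 1 else 0 := by
    rw [Finsupp.finset_sum_apply]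
    simp only [Finsupp.single_apply]
    exact Finset.sum_ite_eq' S k (fun _ => 1)
  constructor
  · rw [happ]; split_ifs <;> simp
  · intro hne
    rw [happ] at hne
    by_cases hk : k ∈ S
    · exact hS1 k hk
    · simp [hk] at hne
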